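/- Let L = (L_0, …, L_{m−1}) be a list of lists over a linearly ordered type α that is lexicographically sorted, i.e. L_i ≤lex L_j for all i ≤ j. Then for all 0 ≤ i < j ≤ m−1, lcp(L_i, L_j) = min_{i < k ≤ j} lcp(L_{k−1}, L_k). -/

import Mathlib

/-- The length of the longest common prefix of two lists: the largest
`k ≤ min |a| |b|` such that `a.take k = b.take k`. -/
def lcp {α : Type*} [DecidableEq α] : List α → List α → ℕ
  | x :: xs, y :: ys => if x = y then lcp xs ys + 1 else 0
  | _, _ => 0

/-- Lexicographic (non-strict) order on lists. -/
def lexLe {α : Type*} [LinearOrder α] (a b : List α) : Prop :=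
  List.Lex (· < ·) a b ∨ a = b

lemma lexLe_cons {α : Type*} [LinearOrder α] {x y : α} {xs ys : List α}
    (h : lexLe (x :: xs) (y :: ys)) : x < y ∨ (x = y ∧ lexLe xs ys) := by
  rcases h with h | h
  · cases h with
    | rel h => exact Or.inl h
    | cons h => exact Or.inr ⟨rfl, Or.inl h⟩
  · injection h with h1 h2; exact Or.inr ⟨h1, Or.inr h2⟩

lemma lcp_trans3 {α : Type*} [LinearOrder α] :
    ∀ (a b c : List α), lexLe a b → lexLe b c →
      lcp a c = min (lcp a b) (lcp b c)
  | [], b, c, _, _ => by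
      have h1 : lcp ([] : List α) c = 0 := by cases c <;> rfl
      have h2 : lcp ([] : List α) b = 0 := by cases b <;> rfl
      simp [h1, h2]
  | x :: xs, [], c, hab, _ => by
      rcases hab with h | h
      · exact absurd h List.not_lex_nil
      · simp at h
  | x :: xs, y :: ys, [], _, hbc => by
      rcases hbc with h | h
      · exact absurd h List.not_lex_nil
      · simp at h
  | x :: xs, y :: ys, z :: zs, hab, hbc => by
      rcases lexLe_cons hab with hxy | ⟨rfl, hab'⟩
      · rcases lexLe_cons hbc with hyz | ⟨rfl, _⟩
        · have hxz : x < z := hxy.trans hyz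
          simp [lcp, hxz.ne, hxy.ne]
        · simp [lcp, hxy.ne]
      · rcases lexLe_cons hbc with hyz | ⟨rfl, hbc'⟩
        · simp [lcp, hyz.ne]
        · have := lcp_trans3 xs ys zs hab' hbc'
          simp [lcp, this]

lemma inf'_congr_set {α β : Type*} [SemilatticeInf β] {s t : Finset α}
    (h : s = t) (hs : s.Nonempty) (ht : t.Nonempty) (f : α → β) :
    s.inf' hs f = t.inf' ht f := by subst h; rfl

theorem stmt_8 {α : Type*} [LinearOrder α] (m : ℕ) (L : Fin m → List α)
    (hsorted : ∀ i j : Fin m, i ≤ j → lexLe (L i) (L j)) :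
    ∀ i j : Fin m, ∀ hij : i < j,
      lcp (L i) (L j) =
        (Finset.Ioc i j).inf' (Finset.nonempty_Ioc.mpr hij)
          (fun k => lcp (L ⟨k.1 - 1, by have := k.isLt; omega⟩) (L k)) := by
  suffices H : ∀ n : ℕ, ∀ i j : Fin m, ∀ hij : i < j, j.1 = i.1 + n + 1 →
      lcp (L i) (L j) =
        (Finset.Ioc i j).inf' (Finset.nonempty_Ioc.mpr hij)
          (fun k => lcp (L ⟨k.1 - 1, by have := k.isLt; omega⟩) (L k)) by
    intro i j hij
    exact H (j.1 - i.1 - 1) i j hij (by have h := Fin.lt_def.mp hij; omega)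
  intro n
  induction n with
  | zero =>
    intro i j hij hj
    have hIoc : Finset.Ioc i j = {j} := by
      ext k
      simp only [Finset.mem_Ioc, Finset.mem_singleton, Fin.lt_def, Fin.le_def]
      constructor
      · rintro ⟨h1, h2⟩; exact Fin.ext (by omega)
      · rintro rfl; omega
    rw [inf'_congr_set hIoc _ (Finset.singleton_nonempty j)]
    rw [Finset.inf'_singleton]
    have hi : i = ⟨j.1 - 1, by have := j.isLt; omega⟩ := Fin.ext (by simp; omega)
    rw [← hi]
  | succ n ih =>
    intro i j hij hj
    have hjm : j.1 - 1 < m := by have := j.isLt; omega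
    set j' : Fin m := ⟨j.1 - 1, hjm⟩ with hj'
    have hij' : i < j' := by simp [Fin.lt_def, hj']; omega
    have hj'j : j' < j := by simp [Fin.lt_def, hj']; omega
    have hset : Finset.Ioc i j = insert j (Finset.Ioc i j') := by
      ext k
      simp only [Finset.mem_Ioc, Finset.mem_insert, Fin.lt_def, Fin.le_def, hj']
      constructor
      · rintro ⟨h1, h2⟩
        rcases Nat.lt_or_ge k.1 j.1 with h | h
        · exact Or.inr ⟨h1, by omega⟩
        · exact Or.inl (Fin.ext (by omega))
      · rintro (rfl | ⟨h1, h2⟩)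
        · omega
        · omega
    rw [inf'_congr_set hset _ (Finset.insert_nonempty _ _)]
    rw [Finset.inf'_insert (Finset.nonempty_Ioc.mpr hij')]
    have key : lcp (L i) (L j) = min (lcp (L i) (L j')) (lcp (L j') (L j)) :=
      lcp_trans3 _ _ _ (hsorted i j' hij'.le) (hsorted j' j hj'j.le)
    rw [key, ih i j' hij' (by simp [hj']; omega)]
    exact min_comm _ _
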